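/- arXiv:2305.03397 — 2 statements merged into one kernel-verified Lean document; each statement's English description precedes it below -/
import Mathlib

section
/- For all real z and ζ, one has |F(z + ζ) − F(z) − φ(z)·ζ| ≤ ζ²/(2(c₁ − c₀)). -/
lemma log_up {x : ℝ} (hx : x < 1) : x + Real.log (1 - x) ≤ 0 := by
  have h := Real.log_le_sub_one_of_pos (x := 1 - x) (by linarith)
  linarith

lemma log_neg {x : ℝ} (hx : x ≤ 0) : -(x + Real.log (1 - x)) ≤ x ^ 2 / 2 := by
  set f : ℝ → ℝ := fun x => x ^ 2 / 2 + x + Real.log (1 - x) with hf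
  have hD : ∀ y ∈ interior (Set.Iic (0:ℝ)), HasDerivAt f (-(y^2)/(1-y)) y := by
    intro y hy
    rw [interior_Iic] at hy
    have hy1 : (1:ℝ) - y ≠ 0 := by simp at hy; intro h; linarith
    have h1 : HasDerivAt (fun x : ℝ => 1 - x) (-1) y := by
      simpa using (hasDerivAt_id y).const_sub 1
    have h2 : HasDerivAt (fun x : ℝ => Real.log (1 - x)) (-(1-y)⁻¹) y := by
      exact ((Real.hasDerivAt_log hy1).comp y h1).congr_deriv (by ring)
    have h3 : HasDerivAt f (y + 1 + -(1-y)⁻¹) y := by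
      have := ((hasDerivAt_pow 2 y).div_const 2).add (hasDerivAt_id y)
      exact (this.add h2).congr_deriv (by norm_num)
    convert h3 using 1
    have : y < 0 := hy
    field_simp
    ring
  have hanti : AntitoneOn f (Set.Iic 0) := by
    apply antitoneOn_of_deriv_nonpos (convex_Iic 0)
    · apply ContinuousOn.add
      · exact (ContinuousOn.add (by fun_prop) (by fun_prop))
      · apply ContinuousOn.log (by fun_prop)
        intro x hx; simp at hx; intro h; linarith
    · intro x hx; exact ((hD x hx).differentiableAt).differentiableWithinAt
    · intro x hx
      rw [(hD x hx).deriv]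
      rw [interior_Iic] at hx
      have : x < 0 := hx
      apply div_nonpos_of_nonpos_of_nonneg
      · nlinarith
      · linarith
  have := hanti hx (Set.mem_Iic.2 le_rfl) hx
  simp [f] at this
  linarith

lemma log_pos' {x : ℝ} (hx0 : 0 ≤ x) (hx1 : x < 1) :
    -(x + Real.log (1 - x)) ≤ x ^ 2 / (2 * (1 - x)) := by
  set g : ℝ → ℝ := fun x => x ^ 2 / (2 * (1 - x)) + x + Real.log (1 - x) with hg
  have hD : ∀ y ∈ interior (Set.Ico (0:ℝ) 1),
      HasDerivAt g (y^2 / (2 * (1-y)^2)) y := by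
    intro y hy
    rw [interior_Ico] at hy
    obtain ⟨hy0, hy1⟩ := hy
    have hy1' : (1:ℝ) - y ≠ 0 := by intro h; linarith
    have h1 : HasDerivAt (fun x : ℝ => 1 - x) (-1) y := by
      simpa using (hasDerivAt_id y).const_sub 1
    have h2 : HasDerivAt (fun x : ℝ => Real.log (1 - x)) (-(1-y)⁻¹) y := by
      exact ((Real.hasDerivAt_log hy1').comp y h1).congr_deriv (by ring)
    have hq : HasDerivAt (fun x : ℝ => x ^ 2 / (2 * (1 - x)))
        ((2 * y ^ 1 * (2 * (1 - y)) - y ^ 2 * (2 * (-1))) / (2 * (1 - y)) ^ 2) y := by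
      apply HasDerivAt.div
      · simpa using hasDerivAt_pow 2 y
      · simpa using h1.const_mul 2
      · intro h
        rcases mul_eq_zero.1 h with h' | h'
        · norm_num at h'
        · exact hy1' h'
    have h3 := (hq.add (hasDerivAt_id y)).add h2
    exact h3.congr_deriv (by field_simp; ring)
  have hmono : MonotoneOn g (Set.Ico 0 1) := by
    apply monotoneOn_of_deriv_nonneg (convex_Ico 0 1)
    · apply ContinuousOn.add
      · apply ContinuousOn.add
        · apply ContinuousOn.div (by fun_prop) (by fun_prop)
          intro x hx; simp at hx; intro h; nlinarith [hx.2]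
        · fun_prop
      · apply ContinuousOn.log (by fun_prop)
        intro x hx; simp at hx; intro h; linarith [hx.2]
    · intro x hx; exact ((hD x hx).differentiableAt).differentiableWithinAt
    · intro x hx
      rw [(hD x hx).deriv]
      positivity
  have := hmono (Set.mem_Ico.2 ⟨le_rfl, one_pos⟩) (Set.mem_Ico.2 ⟨hx0, hx1⟩) hx0
  simp [g] at this
  linarith

noncomputable def phi (c₀ c₁ : ℝ) (z : ℝ) : ℝ :=
  if z ≤ c₀ then (c₀ - z) / (c₁ - z) else 0

noncomputable def F (c₀ c₁ : ℝ) (s : ℝ) : ℝ :=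
  if s ≤ c₀ then s + (c₁ - c₀) * Real.log ((c₁ - s) / c₁)
  else c₀ + (c₁ - c₀) * Real.log ((c₁ - c₀) / c₁)

lemma expr_eq (c₀ c₁ z ζ : ℝ) (hc₀ : 0 < c₀) (hc : c₀ < c₁) (hz : z ≤ c₀)
    (hs : z + ζ ≤ c₀) :
    F c₀ c₁ (z + ζ) - F c₀ c₁ z - phi c₀ c₁ z * ζ =
      (c₁ - c₀) * (ζ / (c₁ - z) + Real.log (1 - ζ / (c₁ - z))) := by
  have ha : 0 < c₁ - z := by linarith
  have hb : 0 < c₁ - (z + ζ) := by linarith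
  have hc₁ : 0 < c₁ := by linarith
  rw [F, F, phi, if_pos hz, if_pos hs, if_pos hz]
  rw [Real.log_div (by linarith) (by linarith), Real.log_div (by linarith) (by linarith)]
  have h1 : (1 : ℝ) - ζ / (c₁ - z) = (c₁ - (z + ζ)) / (c₁ - z) := by
    field_simp; ring
  rw [h1, Real.log_div (by linarith) (by linarith)]
  field_simp
  ring

lemma key_bound (c₀ c₁ z ζ : ℝ) (hc₀ : 0 < c₀) (hc : c₀ < c₁) (hz : z ≤ c₀)
    (hs : z + ζ ≤ c₀) :
    |F c₀ c₁ (z + ζ) - F c₀ c₁ z - phi c₀ c₁ z * ζ| ≤ ζ ^ 2 / (2 * (c₁ - c₀)) := by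
  rw [expr_eq c₀ c₁ z ζ hc₀ hc hz hs]
  have hd : (0:ℝ) < c₁ - c₀ := by linarith
  set a := c₁ - z with ha'
  have ha : 0 < a := by rw [ha']; linarith
  have had : c₁ - c₀ ≤ a := by rw [ha']; linarith
  have hb : c₁ - c₀ ≤ a - ζ := by rw [ha']; linarith
  set x := ζ / a with hx'
  have hxa : x * a = ζ := by rw [hx']; field_simp
  have hx1 : x < 1 := by rw [hx', div_lt_one ha]; linarith
  have hle : x + Real.log (1 - x) ≤ 0 := log_up hx1
  have habs : |( c₁ - c₀) * (x + Real.log (1 - x))| =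
      (c₁ - c₀) * (-(x + Real.log (1 - x))) := by
    rw [abs_of_nonpos (by nlinarith)]; ring
  rw [habs, le_div_iff₀ (by positivity)]
  rcases le_or_gt x 0 with hx0 | hx0
  · have h := log_neg hx0
    have h2 : (c₁ - c₀) ^ 2 ≤ a ^ 2 := by nlinarith
    nlinarith [sq_nonneg x, mul_nonneg (le_of_lt hd) (neg_nonneg.2 hle)]
  · have h := log_pos' (le_of_lt hx0) hx1
    have h1x : (0:ℝ) < 1 - x := by linarith
    have hN : 0 ≤ -(x + Real.log (1 - x)) := neg_nonneg.2 hle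
    have h' := (le_div_iff₀ (by positivity : (0:ℝ) < 2 * (1 - x))).mp h
    have hax : (1 - x) * a = a - ζ := by nlinarith
    have step1 : -(x + Real.log (1 - x)) * (a - ζ) ≤ x ^ 2 / 2 * a := by
      nlinarith [mul_le_mul_of_nonneg_right h' (le_of_lt ha)]
    have hz2 : ζ ^ 2 = x ^ 2 * a ^ 2 := by rw [← hxa]; ring
    rw [hz2]
    calc (c₁ - c₀) * -(x + Real.log (1 - x)) * (2 * (c₁ - c₀))
        ≤ 2 * (c₁ - c₀) * (-(x + Real.log (1 - x)) * (a - ζ)) := by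
          nlinarith [mul_nonneg (mul_nonneg hN (le_of_lt hd)) (sub_nonneg.mpr hb)]
      _ ≤ 2 * (c₁ - c₀) * (x ^ 2 / 2 * a) :=
          mul_le_mul_of_nonneg_left step1 (by positivity)
      _ = (c₁ - c₀) * (x ^ 2 * a) := by ring
      _ ≤ a * (x ^ 2 * a) := by
          nlinarith [mul_nonneg (mul_nonneg (sub_nonneg.mpr had) (sq_nonneg x)) (le_of_lt ha)]
      _ = x ^ 2 * a ^ 2 := by ring
  
theorem F_taylor_bound (c₀ c₁ : ℝ) (hc₀ : 0 < c₀) (hc : c₀ < c₁) :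
    ∀ z ζ : ℝ, |F c₀ c₁ (z + ζ) - F c₀ c₁ z - phi c₀ c₁ z * ζ| ≤ ζ ^ 2 / (2 * (c₁ - c₀)) := by
  intro z ζ
  have hd : (0:ℝ) < c₁ - c₀ := by linarith
  by_cases hz : z ≤ c₀ <;> by_cases hs : z + ζ ≤ c₀
  · exact key_bound c₀ c₁ z ζ hc₀ hc hz hs
  · -- z ≤ c₀ < z + ζ
    push_neg at hs
    set ζ₁ := c₀ - z with hζ₁
    have hζ₁0 : 0 ≤ ζ₁ := by rw [hζ₁]; linarith
    set ε := ζ - ζ₁ with hε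
    have hε0 : 0 < ε := by rw [hε, hζ₁]; linarith
    have ha : 0 < c₁ - z := by linarith
    have had : c₁ - c₀ ≤ c₁ - z := by linarith
    -- F (z+ζ) = F (z+ζ₁) = F c₀
    have hF : F c₀ c₁ (z + ζ) = F c₀ c₁ (z + ζ₁) := by
      rw [F, F, if_neg (by linarith), if_pos (by rw [hζ₁]; ring_nf; linarith)]
      rw [hζ₁]; ring_nf
    have h1 := expr_eq c₀ c₁ z ζ₁ hc₀ hc hz (by rw [hζ₁]; linarith)
    -- bound on the ζ₁ part: ≤ ζ₁^2 / (2 * (c₁ - z))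
    set x := ζ₁ / (c₁ - z) with hx'
    have hx0 : 0 ≤ x := by positivity
    have hx1 : x < 1 := by rw [hx', div_lt_one ha, hζ₁]; linarith
    have hxa : x * (c₁ - z) = ζ₁ := by rw [hx']; field_simp
    have h1xe : (1 - x) * (c₁ - z) = c₁ - c₀ := by nlinarith
    have hle : x + Real.log (1 - x) ≤ 0 := log_up hx1
    have hN := log_pos' hx0 hx1
    have hbound1 : |F c₀ c₁ (z + ζ₁) - F c₀ c₁ z - phi c₀ c₁ z * ζ₁| ≤
        ζ₁ ^ 2 / (2 * (c₁ - z)) := by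
      rw [h1, abs_of_nonpos (by nlinarith)]
      rw [le_div_iff₀ (by positivity)]
      have hz2 : ζ₁ ^ 2 = x ^ 2 * (c₁ - z) ^ 2 := by rw [← hxa]; ring
      have h1x : (0:ℝ) < 1 - x := by
        rw [hx', sub_pos, div_lt_one ha]; rw [hζ₁]; linarith
      have hN0 : 0 ≤ -(x + Real.log (1 - x)) := neg_nonneg.2 hle
      have h' := (le_div_iff₀ (by positivity : (0:ℝ) < 2 * (1 - x))).mp hN
      have e : -((c₁ - c₀) * (x + Real.log (1 - x))) * (2 * (c₁ - z)) =
          -(x + Real.log (1 - x)) * (2 * (1 - x)) * (c₁ - z) ^ 2 := by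
        rw [← h1xe]; ring
      rw [hz2, e]
      exact mul_le_mul_of_nonneg_right h' (sq_nonneg _)
    have hphi : phi c₀ c₁ z = ζ₁ / (c₁ - z) := by rw [phi, if_pos hz, hζ₁]
    have hsplit : F c₀ c₁ (z + ζ) - F c₀ c₁ z - phi c₀ c₁ z * ζ =
        (F c₀ c₁ (z + ζ₁) - F c₀ c₁ z - phi c₀ c₁ z * ζ₁) - phi c₀ c₁ z * ε := by
      rw [hF, hε]; ring
    rw [hsplit]
    have habs := abs_sub (F c₀ c₁ (z + ζ₁) - F c₀ c₁ z - phi c₀ c₁ z * ζ₁)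
      (phi c₀ c₁ z * ε)
    calc |(F c₀ c₁ (z + ζ₁) - F c₀ c₁ z - phi c₀ c₁ z * ζ₁) - phi c₀ c₁ z * ε|
        ≤ |F c₀ c₁ (z + ζ₁) - F c₀ c₁ z - phi c₀ c₁ z * ζ₁| + |phi c₀ c₁ z * ε| :=
          abs_sub _ _
      _ ≤ ζ₁ ^ 2 / (2 * (c₁ - z)) + (ζ₁ / (c₁ - z)) * ε := by
          apply add_le_add hbound1
          rw [hphi, abs_of_nonneg (mul_nonneg (div_nonneg hζ₁0 (le_of_lt ha)) (le_of_lt hε0))]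
      _ ≤ ζ ^ 2 / (2 * (c₁ - c₀)) := by
          have hζ : ζ = ζ₁ + ε := by rw [hε]; ring
          have e1 : ζ₁ ^ 2 / (2 * (c₁ - z)) + ζ₁ / (c₁ - z) * ε =
              (ζ₁ ^ 2 + 2 * ζ₁ * ε) / (2 * (c₁ - z)) := by
            field_simp
          rw [hζ, e1]
          exact div_le_div₀ (by positivity) (by nlinarith [sq_nonneg ε]) (by positivity)
            (by linarith)
  · -- c₀ < z, z + ζ ≤ c₀
    push_neg at hz
    have hζ' : z + ζ - c₀ ≤ 0 := by linarith
    have hFz : F c₀ c₁ z = F c₀ c₁ c₀ := by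
      rw [F, F, if_neg (by linarith), if_pos le_rfl]
    have hphi : phi c₀ c₁ z = 0 := by rw [phi, if_neg (by linarith)]
    have hphic : phi c₀ c₁ c₀ = 0 := by rw [phi, if_pos le_rfl]; simp
    have h := key_bound c₀ c₁ c₀ (z + ζ - c₀) hc₀ hc le_rfl (by linarith)
    rw [hphic] at h
    have harg : c₀ + (z + ζ - c₀) = z + ζ := by ring
    rw [harg] at h
    simp only [zero_mul, sub_zero] at h
    rw [hphi, zero_mul, sub_zero, hFz]
    refine h.trans ?_
    gcongr ?_ / _
    have hζneg : ζ ≤ 0 := by linarith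
    have h2 : (z + ζ - c₀) ^ 2 ≤ (-ζ) ^ 2 := sq_le_sq' (by linarith) (by linarith)
    simpa using h2
  · -- c₀ < z, c₀ < z + ζ
    push_neg at hz hs
    have h1 : F c₀ c₁ (z + ζ) = F c₀ c₁ z := by
      rw [F, F, if_neg (by linarith), if_neg (by linarith)]
    have hphi : phi c₀ c₁ z = 0 := by rw [phi, if_neg (by linarith)]
    rw [h1, hphi, sub_self, zero_mul, sub_zero, abs_zero]
    positivity
end

section
/- For all u, h ∈ L²(Ω, μ), one has |G(u + h) − G(u) − ∫_{Ω₁} φ(u)·h dμ| ≤ ‖h‖²_{L²}/(2(c₁ − c₀)). -/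
open MeasureTheory

lemma phi_nonneg {c₀ c₁ : ℝ} (hc : c₀ < c₁) (z : ℝ) : 0 ≤ phi c₀ c₁ z := by
  unfold phi; split_ifs with hz
  · apply div_nonneg <;> linarith
  · exact le_refl 0

lemma phi_le_one {c₀ c₁ : ℝ} (hc : c₀ < c₁) (z : ℝ) : phi c₀ c₁ z ≤ 1 := by
  unfold phi; split_ifs with hz
  · rw [div_le_one (by linarith)]; linarith
  · norm_num

lemma phi_eq {c₀ c₁ : ℝ} (hc : c₀ < c₁) {s : ℝ} (hs : s ≤ c₀) :
    phi c₀ c₁ s = 1 - (c₁ - c₀) / (c₁ - s) := by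
  have hne : c₁ - s ≠ 0 := by intro h; linarith [hs]
  unfold phi
  rw [if_pos hs]
  field_simp
  ring

lemma hasDerivAt_g (c₀ c₁ : ℝ) (h0 : 0 < c₁) {s : ℝ} (hs : s < c₁) :
    HasDerivAt (fun s => s + (c₁ - c₀) * Real.log ((c₁ - s) / c₁))
      (1 - (c₁ - c₀) / (c₁ - s)) s := by
  have h1 : (0:ℝ) < c₁ - s := by linarith
  have hinner : HasDerivAt (fun s : ℝ => (c₁ - s) / c₁) (-1 / c₁) s := by
    simpa using ((hasDerivAt_const s c₁).sub (hasDerivAt_id s)).div_const c₁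
  have hlog : HasDerivAt (fun s : ℝ => Real.log ((c₁ - s) / c₁))
      ((-1 / c₁) / ((c₁ - s) / c₁)) s :=
    hinner.log (by positivity)
  have := (hasDerivAt_id s).add (hlog.const_mul (c₁ - c₀))
  exact this.congr_deriv (by field_simp; ring)

lemma hasDerivAt_F {c₀ c₁ : ℝ} (h0 : 0 < c₀) (hc : c₀ < c₁) (s : ℝ) :
    HasDerivAt (F c₀ c₁) (phi c₀ c₁ s) s := by
  have hc₁ : (0:ℝ) < c₁ := lt_trans h0 hc
  rcases lt_trichotomy s c₀ with hs | hs | hs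
  · have h := hasDerivAt_g c₀ c₁ hc₁ (lt_trans hs hc)
    rw [phi_eq hc hs.le]
    refine h.congr_of_eventuallyEq ?_
    filter_upwards [eventually_lt_nhds hs] with t ht
    unfold F; rw [if_pos ht.le]
  · have hIic : HasDerivWithinAt (F c₀ c₁) (phi c₀ c₁ s) (Set.Iic c₀) s := by
      have h := (hasDerivAt_g c₀ c₁ hc₁ (by linarith)).hasDerivWithinAt (s := Set.Iic c₀)
      rw [phi_eq hc hs.le]
      refine h.congr (fun t ht => ?_) ?_
      · unfold F; rw [if_pos (Set.mem_Iic.mp ht)]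
      · unfold F; rw [if_pos hs.le]
    have hIci : HasDerivWithinAt (F c₀ c₁) (phi c₀ c₁ s) (Set.Ici c₀) s := by
      have h0' : phi c₀ c₁ s = 0 := by
        unfold phi; rw [if_pos hs.le, hs]; simp
      rw [h0']
      refine (hasDerivWithinAt_const s _ (c₀ + (c₁ - c₀) * Real.log ((c₁ - c₀) / c₁))).congr
        (fun t ht => ?_) ?_
      · unfold F
        rcases eq_or_lt_of_le (Set.mem_Ici.mp ht) with h | h
        · rw [← h, if_pos le_rfl]
        · rw [if_neg (not_le.mpr h)]
      · unfold F; rw [if_pos hs.le, hs]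
    have := hIic.union hIci
    rw [hs] at this ⊢
    rwa [Set.Iic_union_Ici, hasDerivWithinAt_univ] at this
  · have h0' : phi c₀ c₁ s = 0 := by
      unfold phi; rw [if_neg (not_le.mpr hs)]
    rw [h0']
    refine (hasDerivAt_const s (c₀ + (c₁ - c₀) * Real.log ((c₁ - c₀) / c₁))).congr_of_eventuallyEq ?_
    filter_upwards [eventually_gt_nhds hs] with t ht
    unfold F; rw [if_neg (not_le.mpr ht)]

lemma phi_lipschitz {c₀ c₁ : ℝ} (hc : c₀ < c₁) (z w : ℝ) :
    |phi c₀ c₁ z - phi c₀ c₁ w| ≤ (c₁ - c₀)⁻¹ * |z - w| := by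
  have hd : (0:ℝ) < c₁ - c₀ := by linarith
  unfold phi
  split_ifs with hz hw hw
  · have h1 : (0:ℝ) < c₁ - z := by linarith
    have h2 : (0:ℝ) < c₁ - w := by linarith
    have key : (c₀ - z) / (c₁ - z) - (c₀ - w) / (c₁ - w)
        = ((c₁ - c₀) * (w - z)) / ((c₁ - z) * (c₁ - w)) := by
      field_simp; ring
    rw [key, abs_div, abs_mul, abs_of_pos (mul_pos h1 h2), abs_of_pos hd]
    rw [div_le_iff₀ (mul_pos h1 h2), inv_mul_eq_div, div_mul_eq_mul_div,
      le_div_iff₀ hd, abs_sub_comm w z]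
    have h3 : (c₁ - c₀) * (c₁ - c₀) ≤ (c₁ - z) * (c₁ - w) := by nlinarith
    nlinarith [mul_le_mul_of_nonneg_left h3 (abs_nonneg (z - w))]
  · push_neg at hw
    have h1 : (0:ℝ) < c₁ - z := by linarith
    rw [sub_zero, abs_of_nonneg (div_nonneg (by linarith) h1.le)]
    rw [div_le_iff₀ h1, inv_mul_eq_div, div_mul_eq_mul_div, le_div_iff₀ hd]
    have : |z - w| = w - z := by rw [abs_sub_comm]; exact abs_of_pos (by linarith)
    nlinarith
  · push_neg at hz
    have h2 : (0:ℝ) < c₁ - w := by linarith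
    rw [zero_sub, abs_neg, abs_of_nonneg (div_nonneg (by linarith) h2.le)]
    rw [div_le_iff₀ h2, inv_mul_eq_div, div_mul_eq_mul_div, le_div_iff₀ hd]
    have : |z - w| = z - w := abs_of_pos (by linarith)
    nlinarith
  · rw [sub_self, abs_zero]; positivity

lemma descend {g g' : ℝ → ℝ} {C : ℝ} (hg : ∀ t, HasDerivAt g (g' t) t)
    (hb : ∀ t ∈ Set.Icc (0:ℝ) 1, g' t ≤ C * t) : g 1 - g 0 ≤ C / 2 := by
  set q : ℝ → ℝ := fun t => g t - C * t ^ 2 / 2 with hq_def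
  have hq : ∀ t, HasDerivAt q (g' t - C * t) t := by
    intro t
    have h2 : HasDerivAt (fun t : ℝ => C * t ^ 2 / 2) (C * t) t := by
      have := ((hasDerivAt_pow 2 t).const_mul C).div_const 2
      exact this.congr_deriv (by ring)
    exact (hg t).sub h2
  have hanti : AntitoneOn q (Set.Icc (0:ℝ) 1) := by
    apply antitoneOn_of_deriv_nonpos (convex_Icc 0 1)
    · exact fun t _ => ((hq t).continuousAt).continuousWithinAt
    · exact fun t _ => ((hq t).differentiableAt).differentiableWithinAt
    · intro t ht
      rw [interior_Icc] at ht
      rw [(hq t).deriv]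
      have := hb t ⟨ht.1.le, ht.2.le⟩
      linarith
  have := hanti (Set.left_mem_Icc.mpr zero_le_one) (Set.right_mem_Icc.mpr zero_le_one) zero_le_one
  simp only [hq_def] at this
  nlinarith [this]

lemma taylor_aux {f f' : ℝ → ℝ} {L : ℝ} (hf : ∀ x, HasDerivAt f (f' x) x)
    (hlip : ∀ z w, |f' z - f' w| ≤ L * |z - w|) (a b : ℝ) :
    |f (a + b) - f a - f' a * b| ≤ L * b ^ 2 / 2 := by
  have hline : ∀ t : ℝ, HasDerivAt (fun t : ℝ => a + t * b) b t := by
    intro t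
    simpa using (hasDerivAt_id t).mul_const b
  have hcomp : ∀ t : ℝ, HasDerivAt (fun t => f (a + t * b)) (f' (a + t * b) * b) t :=
    fun t => (hf (a + t * b)).comp t (hline t)
  have hbound : ∀ t ∈ Set.Icc (0:ℝ) 1, |(f' (a + t * b) - f' a) * b| ≤ (L * b ^ 2) * t := by
    intro t ht
    rw [abs_mul]
    calc |f' (a + t * b) - f' a| * |b| ≤ (L * |a + t * b - a|) * |b| :=
          mul_le_mul_of_nonneg_right (hlip _ _) (abs_nonneg b)
      _ = (L * b ^ 2) * t := by
          rw [add_sub_cancel_left, abs_mul, abs_of_nonneg ht.1]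
          linear_combination (L * t) * abs_mul_abs_self b
  have hg1 : ∀ t, HasDerivAt (fun t => f (a + t * b) - t * (f' a * b))
      (f' (a + t * b) * b - f' a * b) t :=
    fun t => (hcomp t).sub (by simpa using (hasDerivAt_id t).mul_const (f' a * b))
  have h1 := descend hg1 (C := L * b ^ 2) (by
    intro t ht
    calc f' (a + t * b) * b - f' a * b = (f' (a + t * b) - f' a) * b := by ring
      _ ≤ (L * b ^ 2) * t := (le_abs_self _).trans (hbound t ht))
  have hg2 : ∀ t, HasDerivAt (fun t => t * (f' a * b) - f (a + t * b))
      (f' a * b - f' (a + t * b) * b) t :=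
    fun t => HasDerivAt.sub (by simpa using (hasDerivAt_id t).mul_const (f' a * b)) (hcomp t)
  have h2 := descend hg2 (C := L * b ^ 2) (by
    intro t ht
    calc f' a * b - f' (a + t * b) * b = -((f' (a + t * b) - f' a) * b) := by ring
      _ ≤ (L * b ^ 2) * t := (neg_le_abs _).trans (hbound t ht))
  simp only [one_mul, zero_mul, add_zero, sub_zero, zero_sub] at h1 h2
  rw [abs_le]
  constructor <;> linarith

lemma taylor_F {c₀ c₁ : ℝ} (h0 : 0 < c₀) (hc : c₀ < c₁) (a b : ℝ) :
    |F c₀ c₁ (a + b) - F c₀ c₁ a - phi c₀ c₁ a * b| ≤ b ^ 2 / (2 * (c₁ - c₀)) := by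
  have hd : (0:ℝ) < c₁ - c₀ := by linarith
  have := taylor_aux (hasDerivAt_F h0 hc) (phi_lipschitz hc) a b
  calc |F c₀ c₁ (a + b) - F c₀ c₁ a - phi c₀ c₁ a * b| ≤ (c₁ - c₀)⁻¹ * b ^ 2 / 2 := this
    _ = b ^ 2 / (2 * (c₁ - c₀)) := by rw [inv_mul_eq_div, div_div, mul_comm]

noncomputable def G (c₀ c₁ : ℝ) {Ω : Type*} [MeasurableSpace Ω] (μ : Measure Ω)
    (Ω₁ : Set Ω) (u : Lp ℝ 2 μ) : ℝ :=
  ∫ x in Ω₁, F c₀ c₁ (u x) ∂μ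

theorem G_taylor_bound (c₀ c₁ : ℝ) (hc₀ : 0 < c₀) (hc : c₀ < c₁)
    {Ω : Type*} [MeasurableSpace Ω] (μ : Measure Ω) [IsFiniteMeasure μ]
    (Ω₁ : Set Ω) (hΩ₁ : MeasurableSet Ω₁) (u h : Lp ℝ 2 μ) :
    |G c₀ c₁ μ Ω₁ (u + h) - G c₀ c₁ μ Ω₁ u - ∫ x in Ω₁, phi c₀ c₁ (u x) * h x ∂μ| ≤
      ‖h‖ ^ 2 / (2 * (c₁ - c₀)) := by
  have hd : (0:ℝ) < c₁ - c₀ := by linarith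
  have hu2 := Lp.memLp u
  have hh2 := Lp.memLp h
  have hu1 : Integrable (⇑u) μ := hu2.integrable one_le_two
  have hh1 : Integrable (⇑h) μ := hh2.integrable one_le_two
  have hsq : Integrable (fun x => (h x) ^ 2) μ := hh2.integrable_sq
  have hFcont : Continuous (F c₀ c₁) :=
    continuous_iff_continuousAt.mpr fun x => (hasDerivAt_F hc₀ hc x).continuousAt
  have hFbd : ∀ s t : ℝ, |F c₀ c₁ s - F c₀ c₁ t| ≤ |s - t| := by
    intro s t
    have := convex_univ.norm_image_sub_le_of_norm_hasDerivWithin_le (C := 1) (f := F c₀ c₁)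
      (f' := phi c₀ c₁)
      (fun x _ => (hasDerivAt_F hc₀ hc x).hasDerivWithinAt)
      (fun x _ => by
        rw [Real.norm_eq_abs, abs_of_nonneg (phi_nonneg hc x)]; exact phi_le_one hc x)
      (Set.mem_univ t) (Set.mem_univ s)
    simpa [Real.norm_eq_abs] using this
  have hK : (0:ℝ) ≤ (c₁ - c₀)⁻¹ := by positivity
  have hphicont : Continuous (phi c₀ c₁) :=
    (LipschitzWith.of_dist_le_mul (K := ⟨(c₁ - c₀)⁻¹, hK⟩) (fun z w => by
      simp only [Real.dist_eq, NNReal.coe_mk]; exact phi_lipschitz hc z w)).continuous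
  have hFint : ∀ v : Ω → ℝ, Integrable v μ → Integrable (fun x => F c₀ c₁ (v x)) μ := by
    intro v hv
    refine (hv.abs.add (integrable_const (|F c₀ c₁ 0|))).mono'
      (hFcont.comp_aestronglyMeasurable hv.aestronglyMeasurable) ?_
    filter_upwards with x
    rw [Real.norm_eq_abs]
    have h1 := abs_sub_abs_le_abs_sub (F c₀ c₁ (v x)) (F c₀ c₁ 0)
    have h2 := hFbd (v x) 0
    rw [sub_zero] at h2
    simp only [Pi.add_apply]
    linarith
  have hFu := hFint _ hu1
  have hFuh : Integrable (fun x => F c₀ c₁ (u x + h x)) μ := hFint _ (hu1.add hh1)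
  have hphih : Integrable (fun x => phi c₀ c₁ (u x) * h x) μ := by
    refine hh1.abs.mono'
      ((hphicont.comp_aestronglyMeasurable hu1.aestronglyMeasurable).mul
        hh1.aestronglyMeasurable) ?_
    filter_upwards with x
    rw [Real.norm_eq_abs, abs_mul]
    calc |phi c₀ c₁ (u x)| * |h x| ≤ 1 * |h x| :=
          mul_le_mul_of_nonneg_right
            (by rw [abs_of_nonneg (phi_nonneg hc _)]; exact phi_le_one hc _) (abs_nonneg _)
      _ = |h x| := one_mul _
  have e1 : G c₀ c₁ μ Ω₁ (u + h) = ∫ x in Ω₁, F c₀ c₁ (u x + h x) ∂μ := by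
    refine setIntegral_congr_ae hΩ₁ ?_
    filter_upwards [Lp.coeFn_add u h] with x hx _
    rw [hx, Pi.add_apply]
  have e2 : (∫ x in Ω₁, (F c₀ c₁ (u x + h x) - F c₀ c₁ (u x) - phi c₀ c₁ (u x) * h x) ∂μ)
      = (∫ x in Ω₁, F c₀ c₁ (u x + h x) ∂μ) - (∫ x in Ω₁, F c₀ c₁ (u x) ∂μ)
      - (∫ x in Ω₁, phi c₀ c₁ (u x) * h x ∂μ) := by
    have hsub : Integrable (fun x => F c₀ c₁ (u x + h x) - F c₀ c₁ (u x)) μ := hFuh.sub hFu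
    rw [integral_sub hsub.integrableOn hphih.integrableOn,
      integral_sub hFuh.integrableOn hFu.integrableOn]
  have hnorm : (∫ x, (h x) ^ 2 ∂μ) = ‖h‖ ^ 2 := by
    rw [← real_inner_self_eq_norm_sq, L2.inner_def]
    simp_rw [RCLike.inner_apply, starRingEnd_apply, star_trivial, pow_two]
  rw [e1]
  unfold G
  rw [← e2]
  calc |∫ x in Ω₁, (F c₀ c₁ (u x + h x) - F c₀ c₁ (u x) - phi c₀ c₁ (u x) * h x) ∂μ|
      ≤ ∫ x in Ω₁, |F c₀ c₁ (u x + h x) - F c₀ c₁ (u x) - phi c₀ c₁ (u x) * h x| ∂μ :=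
        by
          simpa [Real.norm_eq_abs] using norm_integral_le_integral_norm
            (μ := μ.restrict Ω₁)
            (fun x => F c₀ c₁ (u x + h x) - F c₀ c₁ (u x) - phi c₀ c₁ (u x) * h x)
    _ ≤ ∫ x in Ω₁, (h x) ^ 2 / (2 * (c₁ - c₀)) ∂μ := by
        refine integral_mono_of_nonneg (Filter.Eventually.of_forall fun x => abs_nonneg _)
          ((hsq.div_const _).integrableOn) (Filter.Eventually.of_forall fun x => ?_)
        exact taylor_F hc₀ hc (u x) (h x)
    _ ≤ ∫ x, (h x) ^ 2 / (2 * (c₁ - c₀)) ∂μ :=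
        setIntegral_le_integral (hsq.div_const _)
          (Filter.Eventually.of_forall fun x => by positivity)
    _ = (∫ x, (h x) ^ 2 ∂μ) / (2 * (c₁ - c₀)) := integral_div _ _
    _ = ‖h‖ ^ 2 / (2 * (c₁ - c₀)) := by rw [hnorm]
end
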